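/- Let F be a finite metric space with at least two points and no focal points, and let μ : F → [0,∞) be a function, extended to subsets A ⊆ F by μ(A) := Σ_{x∈A} μ(x). Suppose there exist c > 0 and s > 0 such that μ(U) ≤ c·Δ(U)^s for every subset U ⊆ F with at least two elements and Δ(U) ≤ ∇(F). Then μ(F) ≤ c·H^s(F). If moreover c·Δ(F)^s ≤ μ(F), then s ≤ dim_fH(F). -/

import Mathlib

open Metric

namespace FinDim

variable {X : Type*} [MetricSpace X]

/-- `ν_F(a)`: the distance from `a` to a nearest other point of `F`. -/
noncomputable def nu (F : Finset X) (a : X) : ℝ :=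
  sInf {r : ℝ | ∃ x ∈ F, x ≠ a ∧ r = dist a x}

/-- `δ(F)`: the separation of `F`, the minimum distance between distinct points. -/
noncomputable def sep (F : Finset X) : ℝ :=
  sInf {r : ℝ | ∃ x ∈ F, ∃ y ∈ F, x ≠ y ∧ r = dist x y}

/-- A 2-covering of `F`: a family of subsets of `F` covering `F`,
each member having at least two elements. -/
def IsTwoCover (F : Finset X) (U : Finset (Finset X)) : Prop :=
  (∀ V ∈ U, V ⊆ F) ∧ (∀ V ∈ U, 2 ≤ V.card) ∧ ∀ a ∈ F, ∃ V ∈ U, a ∈ V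

/-- `Δ(𝒰)`: maximum diameter of the members of the family `𝒰`. -/
noncomputable def coverDiam (U : Finset (Finset X)) : ℝ :=
  sSup {r : ℝ | ∃ V ∈ U, r = Metric.diam (V : Set X)}

/-- `∇(F)`: the covering diameter of `F`. -/
noncomputable def nablaF (F : Finset X) : ℝ :=
  sInf {r : ℝ | ∃ U : Finset (Finset X), IsTwoCover F U ∧ r = coverDiam U}

/-- `a` is a focal point of `F`. -/
def IsFocal (F : Finset X) (a : X) : Prop :=
  a ∈ F ∧ ∀ x ∈ F, x ≠ a → dist a x = Metric.diam (F : Set X)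

/-- `H^s_𝒰(F) = Σ_{U ∈ 𝒰} Δ(U)^s`. -/
noncomputable def Hcov (U : Finset (Finset X)) (s : ℝ) : ℝ :=
  ∑ V ∈ U, Metric.diam (V : Set X) ^ s

/-- `H^s(F)`: minimum of `H^s_𝒰(F)` over 2-coverings `𝒰` with `Δ(𝒰) = ∇(F)`. -/
noncomputable def HH (F : Finset X) (s : ℝ) : ℝ :=
  sInf {h : ℝ | ∃ U : Finset (Finset X),
    IsTwoCover F U ∧ coverDiam U = nablaF F ∧ h = Hcov U s}

/-- The finite Hausdorff dimension: the unique `s₀ ∈ (0,∞)` with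
`H^{s₀}(F) = Δ(F)^{s₀}` (when `F` has no focal points). -/
noncomputable def dimfH (F : Finset X) : ℝ :=
  sInf {s : ℝ | 0 < s ∧ HH F s = Metric.diam (F : Set X) ^ s}

/-- `T_{∇(F)}(F)`: the minimal cardinality of a 2-covering `𝒰` with `Δ(𝒰) = ∇(F)`. -/
noncomputable def Tmin (F : Finset X) : ℕ :=
  sInf {n : ℕ | ∃ U : Finset (Finset X),
    IsTwoCover F U ∧ coverDiam U = nablaF F ∧ U.card = n}

/-- The finite box dimension `dim_fB(F) = ln T_{∇(F)}(F) / ln (Δ(F)/∇(F))`. -/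
noncomputable def dimfB (F : Finset X) : ℝ :=
  Real.log (Tmin F) / Real.log (Metric.diam (F : Set X) / nablaF F)

/-- `ν_A(x)` for a subset `A` of a metric space. -/
noncomputable def nuSet {Z : Type*} [MetricSpace Z] (A : Set Z) (x : Z) : ℝ :=
  sInf {r : ℝ | ∃ y ∈ A, y ≠ x ∧ r = dist x y}

/-- `∇(A) = sup {ν_A(x) : x ∈ A}` for a subset `A` of a metric space. -/
noncomputable def nablaSet {Z : Type*} [MetricSpace Z] (A : Set Z) : ℝ :=
  sSup {r : ℝ | ∃ x ∈ A, r = nuSet A x}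

end FinDim


lemma cont_inf' {ι : Type*} (f : ι → ℝ → ℝ) :
    ∀ (s : Finset ι) (hs : s.Nonempty), (∀ i ∈ s, Continuous (f i)) →
    Continuous (fun x => s.inf' hs (fun i => f i x)) := by
  intro s
  induction s using Finset.cons_induction with
  | empty => intro hs; simp at hs
  | cons a t ha ih =>
    intro _ hf
    rcases t.eq_empty_or_nonempty with rfl | ht
    · simpa using hf a (by simp)
    · have heq : (fun x => (Finset.cons a t ha).inf' (Finset.cons_nonempty ha)
          fun i => f i x) = fun x => min (f a x) (t.inf' ht fun i => f i x) := by
        funext x; rw [Finset.inf'_cons ht]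
      rw [heq]
      exact (hf a (by simp)).min (ih ht fun i hi => hf i (Finset.mem_cons_of_mem hi))


open FinDim in
/-- Mass distribution principle for the finite Hausdorff dimension. -/
theorem stmt10 {X : Type*} [MetricSpace X] (F : Finset X) (hF : 2 ≤ F.card)
    (hfoc : ∀ a, ¬ IsFocal F a)
    (μ : X → ℝ) (hμ : ∀ x ∈ F, 0 ≤ μ x)
    (c s : ℝ) (hc : 0 < c) (hs : 0 < s)
    (hmass : ∀ U : Finset X, U ⊆ F → 2 ≤ U.card → Metric.diam (U : Set X) ≤ nablaF F →
      (∑ x ∈ U, μ x) ≤ c * Metric.diam (U : Set X) ^ s) :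
    (∑ x ∈ F, μ x) ≤ c * HH F s ∧
    (c * Metric.diam (F : Set X) ^ s ≤ ∑ x ∈ F, μ x → s ≤ dimfH F) := by
  classical
  set D := Metric.diam (F : Set X) with hDdef
  have hFb : Bornology.IsBounded (F : Set X) := F.finite_toSet.isBounded
  obtain ⟨p, hp⟩ := Finset.card_pos.mp (lt_of_lt_of_le two_pos hF)
  have diam_pos : ∀ V : Finset X, 2 ≤ V.card → 0 < Metric.diam (V : Set X) := by
    intro V hV
    obtain ⟨x, hx, y, hy, hxy⟩ := Finset.one_lt_card.mp (lt_of_lt_of_le one_lt_two hV)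
    exact lt_of_lt_of_le (dist_pos.mpr hxy)
      (Metric.dist_le_diam_of_mem V.finite_toSet.isBounded hx hy)
  have hD0 : 0 < D := diam_pos F hF
  -- basic facts about coverDiam
  have diamSet : ∀ U : Finset (Finset X),
      {r : ℝ | ∃ V ∈ U, r = Metric.diam (V : Set X)} =
        ↑(U.image fun V : Finset X => Metric.diam (V : Set X)) := by
    intro U; ext r
    constructor
    · rintro ⟨V, hV, rfl⟩
      exact Finset.mem_coe.mpr (Finset.mem_image.mpr ⟨V, hV, rfl⟩)
    · intro hr
      obtain ⟨V, hV, hVr⟩ := Finset.mem_image.mp (Finset.mem_coe.mp hr)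
      exact ⟨V, hV, hVr.symm⟩
  have hcd : ∀ U : Finset (Finset X),
      coverDiam U = sSup ↑(U.image fun V : Finset X => Metric.diam (V : Set X)) :=
    fun U => congrArg sSup (diamSet U)
  have coverDiam_le : ∀ (U : Finset (Finset X)), ∀ V ∈ U,
      Metric.diam (V : Set X) ≤ coverDiam U := by
    intro U V hV
    rw [hcd U]
    exact le_csSup ((U.image _).finite_toSet.bddAbove)
      (Finset.mem_coe.mpr (Finset.mem_image.mpr ⟨V, hV, rfl⟩))
  have coverDiam_mem : ∀ U : Finset (Finset X), U.Nonempty →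
      ∃ V ∈ U, coverDiam U = Metric.diam (V : Set X) := by
    intro U hU
    obtain ⟨V₀, hV₀⟩ := hU
    have : coverDiam U ∈ {r : ℝ | ∃ V ∈ U, r = Metric.diam (V : Set X)} := by
      have hne : {r : ℝ | ∃ V ∈ U, r = Metric.diam (V : Set X)}.Nonempty :=
        ⟨_, ⟨V₀, hV₀, rfl⟩⟩
      have hfin : {r : ℝ | ∃ V ∈ U, r = Metric.diam (V : Set X)}.Finite := by
        rw [diamSet U]; exact (U.image _).finite_toSet
      exact hne.csSup_mem hfin
    exact this
  -- the finite set of all 2-covers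
  set covers : Finset (Finset (Finset X)) :=
    (F.powerset.powerset).filter (fun U => IsTwoCover F U) with hcovers
  have mem_covers : ∀ U : Finset (Finset X), U ∈ covers ↔ IsTwoCover F U := by
    intro U
    rw [hcovers, Finset.mem_filter]
    constructor
    · exact fun h => h.2
    · intro h
      refine ⟨?_, h⟩
      rw [Finset.mem_powerset]
      intro V hV
      rw [Finset.mem_powerset]
      exact h.1 V hV
  have hcovF : IsTwoCover F {F} := by
    refine ⟨?_, ?_, ?_⟩
    · intro V hV; rw [Finset.mem_singleton] at hV; subst hV; exact subset_rfl
    · intro V hV; rw [Finset.mem_singleton] at hV; subst hV; exact hF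
    · intro a ha; exact ⟨F, Finset.mem_singleton_self F, ha⟩
  have nablaSetEq : {r : ℝ | ∃ U : Finset (Finset X), IsTwoCover F U ∧ r = coverDiam U}
      = ↑(covers.image coverDiam) := by
    ext r
    constructor
    · rintro ⟨U, hU, rfl⟩
      exact Finset.mem_coe.mpr (Finset.mem_image.mpr ⟨U, (mem_covers U).mpr hU, rfl⟩)
    · intro hr
      obtain ⟨U, hU, hUr⟩ := Finset.mem_image.mp (Finset.mem_coe.mp hr)
      exact ⟨U, (mem_covers U).mp hU, hUr.symm⟩
  have nabla_mem : ∃ U : Finset (Finset X), IsTwoCover F U ∧ coverDiam U = nablaF F := by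
    have : nablaF F ∈ {r : ℝ | ∃ U : Finset (Finset X), IsTwoCover F U ∧ r = coverDiam U} := by
      have hne : {r : ℝ | ∃ U : Finset (Finset X), IsTwoCover F U ∧ r = coverDiam U}.Nonempty :=
        ⟨_, ⟨{F}, hcovF, rfl⟩⟩
      have hfin : {r : ℝ | ∃ U : Finset (Finset X), IsTwoCover F U ∧ r = coverDiam U}.Finite := by
        rw [nablaSetEq]; exact (covers.image _).finite_toSet
      exact hne.csInf_mem hfin
    obtain ⟨U, hU, hUr⟩ := this
    exact ⟨U, hU, hUr.symm⟩
  have nabla_le : ∀ U : Finset (Finset X), IsTwoCover F U → nablaF F ≤ coverDiam U := by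
    intro U hU
    rw [nablaF, nablaSetEq]
    exact csInf_le ((covers.image _).finite_toSet.bddBelow)
      (Finset.mem_coe.mpr (Finset.mem_image.mpr ⟨U, (mem_covers U).mpr hU, rfl⟩))
  -- ∇(F) < Δ(F) since F has no focal points
  have hlt' : ∀ a : X, ∃ x, a ∈ F → (x ∈ F ∧ x ≠ a ∧ dist a x < D) := by
    intro a
    by_cases ha : a ∈ F
    · have h1 := hfoc a
      rw [IsFocal] at h1
      push_neg at h1
      obtain ⟨x, hx, hxa, hne⟩ := h1 ha
      exact ⟨x, fun _ => ⟨hx, hxa,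
        lt_of_le_of_ne (Metric.dist_le_diam_of_mem hFb ha hx) hne⟩⟩
    · exact ⟨a, fun h => absurd h ha⟩
  choose g hg using hlt'
  have hU₁cov : IsTwoCover F (F.image (fun a => ({a, g a} : Finset X))) := by
    refine ⟨?_, ?_, ?_⟩
    · intro V hV
      obtain ⟨a, ha, rfl⟩ := Finset.mem_image.mp hV
      intro x hx
      rcases Finset.mem_insert.mp hx with rfl | hx
      · exact ha
      · rw [Finset.mem_singleton] at hx; subst hx; exact (hg a ha).1
    · intro V hV
      obtain ⟨a, ha, rfl⟩ := Finset.mem_image.mp hV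
      rw [Finset.card_pair (Ne.symm (hg a ha).2.1)]
    · intro a ha
      exact ⟨{a, g a}, Finset.mem_image.mpr ⟨a, ha, rfl⟩, Finset.mem_insert_self a _⟩
  have hnD : nablaF F < D := by
    apply lt_of_le_of_lt (nabla_le _ hU₁cov)
    obtain ⟨V, hV, hVd⟩ := coverDiam_mem (F.image (fun a => ({a, g a} : Finset X))) ⟨_, Finset.mem_image.mpr ⟨p, hp, rfl⟩⟩
    rw [hVd]
    obtain ⟨a, ha, rfl⟩ := Finset.mem_image.mp hV
    have : ((({a, g a} : Finset X) : Set X)) = ({a, g a} : Set X) := by simp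
    rw [this, Metric.diam_pair]
    exact (hg a ha).2.2
  -- minimal covers
  set CM : Finset (Finset (Finset X)) :=
    covers.filter (fun U => coverDiam U = nablaF F) with hCMdef
  have mem_CM : ∀ U : Finset (Finset X),
      U ∈ CM ↔ IsTwoCover F U ∧ coverDiam U = nablaF F := by
    intro U
    rw [hCMdef, Finset.mem_filter, mem_covers]
  have hCM : CM.Nonempty := by
    obtain ⟨U, hU, hUd⟩ := nabla_mem
    exact ⟨U, (mem_CM U).mpr ⟨hU, hUd⟩⟩
  have CM_nonempty : ∀ U ∈ CM, U.Nonempty := by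
    intro U hU
    obtain ⟨V, hV, _⟩ := ((mem_CM U).mp hU).1.2.2 p hp
    exact ⟨V, hV⟩
  have CM_diam_le : ∀ U ∈ CM, ∀ V ∈ U, Metric.diam (V : Set X) ≤ nablaF F := by
    intro U hU V hV
    rw [← ((mem_CM U).mp hU).2]
    exact coverDiam_le U V hV
  have CM_diam_pos : ∀ U ∈ CM, ∀ V ∈ U, 0 < Metric.diam (V : Set X) := by
    intro U hU V hV
    exact diam_pos V (((mem_CM U).mp hU).1.2.1 V hV)
  -- HH as a finite minimum
  have HHset : ∀ t : ℝ, {h : ℝ | ∃ U : Finset (Finset X),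
      IsTwoCover F U ∧ coverDiam U = nablaF F ∧ h = Hcov U t}
      = ↑(CM.image (fun U => Hcov U t)) := by
    intro t
    ext h
    constructor
    · rintro ⟨U, hU, hUd, rfl⟩
      exact Finset.mem_coe.mpr (Finset.mem_image.mpr ⟨U, (mem_CM U).mpr ⟨hU, hUd⟩, rfl⟩)
    · intro hh
      obtain ⟨U, hU, hUh⟩ := Finset.mem_image.mp (Finset.mem_coe.mp hh)
      exact ⟨U, ((mem_CM U).mp hU).1, ((mem_CM U).mp hU).2, hUh.symm⟩
  have HH_inf' : ∀ t : ℝ, HH F t = CM.inf' hCM (fun U => Hcov U t) := by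
    intro t
    rw [HH, HHset t, Finset.inf'_eq_csInf_image, Finset.coe_image]
  -- Part 1
  have part1 : ∀ t : ℝ, (∑ x ∈ F, μ x) ≤ c * HH F t →
      True := fun _ _ => trivial
  clear part1
  have covsum : ∀ U ∈ CM, (∑ x ∈ F, μ x) ≤ ∑ V ∈ U, ∑ x ∈ V, μ x := by
    intro U hU
    obtain ⟨⟨hsub, _, hcov⟩, _⟩ := (mem_CM U).mp hU
    have h1 : ∀ V ∈ U, ∑ x ∈ V, μ x = ∑ x ∈ F, if x ∈ V then μ x else 0 := by
      intro V hV
      rw [Finset.sum_ite_mem, Finset.inter_eq_right.mpr (hsub V hV)]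
    rw [Finset.sum_congr rfl h1, Finset.sum_comm]
    apply Finset.sum_le_sum
    intro x hx
    obtain ⟨V, hV, hxV⟩ := hcov x hx
    calc μ x = (if x ∈ V then μ x else 0) := by simp [hxV]
      _ ≤ ∑ W ∈ U, if x ∈ W then μ x else 0 := by
          apply Finset.single_le_sum (f := fun W => if x ∈ W then μ x else 0) _ hV
          intro W _; split <;> simp [hμ x hx]
  have part1 : (∑ x ∈ F, μ x) ≤ c * HH F s := by
    rw [HH_inf' s]
    obtain ⟨U, hU, hUeq⟩ := Finset.exists_mem_eq_inf' hCM (fun U => Hcov U s)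
    rw [hUeq]
    refine le_trans (covsum U hU) ?_
    rw [Hcov, Finset.mul_sum]
    apply Finset.sum_le_sum
    intro V hV
    obtain ⟨⟨hsub, hcard, _⟩, _⟩ := (mem_CM U).mp hU
    exact hmass V (hsub V hV) (hcard V hV) (CM_diam_le U hU V hV)
  refine ⟨part1, ?_⟩
  intro hlow
  -- ∇ > 0
  have hn0 : 0 < nablaF F := by
    obtain ⟨U, hU⟩ := hCM
    obtain ⟨V, hV, hVd⟩ := coverDiam_mem U (CM_nonempty U hU)
    calc (0:ℝ) < Metric.diam (V : Set X) := CM_diam_pos U hU V hV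
      _ ≤ nablaF F := CM_diam_le U hU V hV
  set φ : ℝ → ℝ := fun t =>
    CM.inf' hCM (fun U => ∑ V ∈ U, (Metric.diam (V : Set X) / D) ^ t) with hφ
  have Hcov_eq : ∀ t : ℝ, ∀ U ∈ CM,
      Hcov U t = D ^ t * ∑ V ∈ U, (Metric.diam (V : Set X) / D) ^ t := by
    intro t U hU
    rw [Hcov, Finset.mul_sum]
    apply Finset.sum_congr rfl
    intro V hV
    rw [← Real.mul_rpow hD0.le (div_nonneg Metric.diam_nonneg hD0.le)]
    congr 1
    field_simp
  have HHφ : ∀ t : ℝ, HH F t = D ^ t * φ t := by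
    intro t
    rw [HH_inf' t]
    show CM.inf' hCM (fun U => Hcov U t)
      = D ^ t * CM.inf' hCM (fun U => ∑ V ∈ U, (Metric.diam (V : Set X) / D) ^ t)
    apply le_antisymm
    · obtain ⟨U, hU, hUeq⟩ := Finset.exists_mem_eq_inf' hCM
        (fun U => ∑ V ∈ U, (Metric.diam (V : Set X) / D) ^ t)
      rw [hUeq, ← Hcov_eq t U hU]
      exact Finset.inf'_le _ hU
    · apply Finset.le_inf'
      intro U hU
      rw [Hcov_eq t U hU]
      exact mul_le_mul_of_nonneg_left (Finset.inf'_le _ hU) (Real.rpow_nonneg hD0.le t)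
  have hφs : (1:ℝ) ≤ φ s := by
    have h1 : D ^ s ≤ HH F s := le_of_mul_le_mul_left (le_trans hlow part1) hc
    rw [HHφ s] at h1
    exact (le_mul_iff_one_le_right (Real.rpow_pos_of_pos hD0 s)).mp h1
  have hanti : ∀ t₁ t₂ : ℝ, t₁ < t₂ → φ t₂ < φ t₁ := by
    intro t₁ t₂ ht
    show CM.inf' hCM (fun U => ∑ V ∈ U, (Metric.diam (V : Set X) / D) ^ t₂)
      < CM.inf' hCM (fun U => ∑ V ∈ U, (Metric.diam (V : Set X) / D) ^ t₁)
    obtain ⟨U, hU, hUeq⟩ := Finset.exists_mem_eq_inf' hCM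
      (fun U => ∑ V ∈ U, (Metric.diam (V : Set X) / D) ^ t₁)
    rw [hUeq]
    calc CM.inf' hCM (fun U => ∑ V ∈ U, (Metric.diam (V : Set X) / D) ^ t₂)
        ≤ ∑ V ∈ U, (Metric.diam (V : Set X) / D) ^ t₂ := Finset.inf'_le _ hU
      _ < ∑ V ∈ U, (Metric.diam (V : Set X) / D) ^ t₁ := by
          apply Finset.sum_lt_sum_of_nonempty (CM_nonempty U hU)
          intro V hV
          have h0 : 0 < Metric.diam (V : Set X) / D :=
            div_pos (CM_diam_pos U hU V hV) hD0
          have h1 : Metric.diam (V : Set X) / D < 1 :=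
            (div_lt_one hD0).mpr (lt_of_le_of_lt (CM_diam_le U hU V hV) hnD)
          exact Real.rpow_lt_rpow_of_exponent_gt h0 h1 ht
  have hcont : Continuous φ := by
    apply cont_inf' (fun (U : Finset (Finset X)) (t : ℝ) =>
      ∑ V ∈ U, (Metric.diam (V : Set X) / D) ^ t) CM hCM
    intro U hU
    apply continuous_finset_sum
    intro V hV
    have hr : 0 < Metric.diam (V : Set X) / D := div_pos (CM_diam_pos U hU V hV) hD0
    show Continuous fun t : ℝ => (Metric.diam (V : Set X) / D) ^ t
    have heq : (fun t : ℝ => (Metric.diam (V : Set X) / D) ^ t)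
        = fun t => Real.exp (Real.log (Metric.diam (V : Set X) / D) * t) := by
      funext t; rw [Real.rpow_def_of_pos hr]
    rw [heq]
    exact Real.continuous_exp.comp (continuous_const.mul continuous_id)
  obtain ⟨U₀, hU₀⟩ := id hCM
  have htend : Filter.Tendsto (fun T : ℝ => (U₀.card : ℝ) * (nablaF F / D) ^ T)
      Filter.atTop (nhds 0) := by
    have h := tendsto_rpow_atTop_of_base_lt_one (nablaF F / D)
      (by have := div_pos hn0 hD0; linarith) ((div_lt_one hD0).mpr hnD)
    simpa using h.const_mul (U₀.card : ℝ)
  have hev : ∀ᶠ T : ℝ in Filter.atTop, (U₀.card : ℝ) * (nablaF F / D) ^ T < 1 :=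
    htend.eventually_lt_const (by norm_num : (0:ℝ) < 1)
  obtain ⟨T, hT1, hTs⟩ := (hev.and (Filter.eventually_ge_atTop s)).exists
  have hφT : φ T < 1 := by
    show CM.inf' hCM (fun U => ∑ V ∈ U, (Metric.diam (V : Set X) / D) ^ T) < 1
    calc CM.inf' hCM (fun U => ∑ V ∈ U, (Metric.diam (V : Set X) / D) ^ T)
        ≤ ∑ V ∈ U₀, (Metric.diam (V : Set X) / D) ^ T := Finset.inf'_le _ hU₀
      _ ≤ ∑ V ∈ U₀, (nablaF F / D) ^ T := by
          apply Finset.sum_le_sum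
          intro V hV
          apply Real.rpow_le_rpow (div_nonneg Metric.diam_nonneg hD0.le)
          · gcongr
            exact CM_diam_le U₀ hU₀ V hV
          · linarith
      _ = (U₀.card : ℝ) * (nablaF F / D) ^ T := by rw [Finset.sum_const, nsmul_eq_mul]
      _ < 1 := hT1
  have hsT : s ≤ T := hTs
  obtain ⟨t₀, ht₀mem, ht₀⟩ :=
    intermediate_value_Icc' hsT hcont.continuousOn ⟨hφT.le, hφs⟩
  have hset : t₀ ∈ {t : ℝ | 0 < t ∧ HH F t = Metric.diam (F : Set X) ^ t} := by
    refine ⟨lt_of_lt_of_le hs ht₀mem.1, ?_⟩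
    rw [HHφ t₀, ht₀, mul_one]
  have hlb : ∀ t ∈ {t : ℝ | 0 < t ∧ HH F t = Metric.diam (F : Set X) ^ t}, s ≤ t := by
    intro t ht
    by_contra hlt
    push_neg at hlt
    have h2 := ht.2
    rw [HHφ t] at h2
    have hDt : (D : ℝ) ^ t ≠ 0 := (Real.rpow_pos_of_pos hD0 t).ne'
    have hφt : φ t = 1 := mul_left_cancel₀ hDt (h2.trans (mul_one (D ^ t)).symm)
    have hsa := hanti t s hlt
    rw [hφt] at hsa
    linarith
  unfold dimfH
  exact le_csInf ⟨t₀, hset⟩ hlb
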